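/- arXiv:0904.3802 — 6 statements merged into one kernel-verified Lean document; each statement's English description precedes it below -/
import Mathlib

section
/- For the map f(x₁,x₂) = (x₁/2, 2x₂ mod 1) on the open unit square, the set Λ = ⋂_{n≥0} closure(fⁿ(K⁺)) equals the vertical segment {(0, x₂) : 0 ≤ x₂ ≤ 1}, and consequently dim_H Λ = 1 (while 1 − χ_u/χ_s = 1 + (log 2)/(log 2) = 2, so the dimension formula fails for this non-transversal map). -/
open Set MeasureTheory

/-- The doubling map on the second coordinate. -/
noncomputable def NTgmap (y : ℝ) : ℝ := if y < 1/2 then 2*y else 2*y - 1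

lemma NTgmap_irrational {y : ℝ} (h : Irrational y) : Irrational (NTgmap y) := by
  have h2 : Irrational (2 * y) := by
    have := h.ratCast_mul (q := 2) (by norm_num)
    simpa using this
  unfold NTgmap
  split
  · exact h2
  · simpa using h2.sub_intCast 1

lemma NTgmap_mem {y : ℝ} (h : Irrational y) (hy : y ∈ Set.Ioo (0:ℝ) 1) :
    NTgmap y ∈ Set.Ioo (0:ℝ) 1 := by
  obtain ⟨h0, h1⟩ := hy
  have hne : y ≠ 1/2 := fun he => h ⟨(1/2 : ℚ), by rw [he]; norm_num⟩
  unfold NTgmap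
  split_ifs with hlt
  · exact ⟨by linarith, by linarith⟩
  · have : 1/2 < y := lt_of_le_of_ne (not_lt.mp hlt) (Ne.symm hne)
    exact ⟨by linarith, by linarith⟩

lemma NTgmap_mem' {y : ℝ} (hy : y ∈ Set.Ioo (0:ℝ) 1) (hne : y ≠ 1/2) :
    NTgmap y ∈ Set.Ioo (0:ℝ) 1 := by
  obtain ⟨h0, h1⟩ := hy
  unfold NTgmap
  split_ifs with hlt
  · exact ⟨by linarith, by linarith⟩
  · have : 1/2 < y := lt_of_le_of_ne (not_lt.mp hlt) (Ne.symm hne)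
    exact ⟨by linarith, by linarith⟩

lemma NTgmap_iter_div {b : ℝ} (h0 : 0 < b) (h1 : b < 1) :
    ∀ n : ℕ, NTgmap^[n] (b / 2^n) = b := by
  intro n
  induction n with
  | zero => simp
  | succ m ih =>
    rw [Function.iterate_succ_apply]
    have hp : (0:ℝ) < 2^(m+1) := by positivity
    have hm : (1:ℝ) ≤ 2^m := one_le_pow₀ (by norm_num)
    have hlt : b / 2^(m+1) < 1/2 := by
      rw [div_lt_iff₀ hp]
      have : (1:ℝ)/2 * 2^(m+1) = 2^m := by ring
      rw [this]; linarith
    have : NTgmap (b / 2^(m+1)) = b / 2^m := by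
      unfold NTgmap
      rw [if_pos hlt]
      field_simp
      ring
    rw [this, ih]

/-- For the map `f(x₁,x₂) = (x₁/2, 2x₂ mod 1)` on the open unit square,
the set `Λ = ⋂ n, closure (fⁿ(K⁺))` equals the vertical segment `{(0,x₂) : 0 ≤ x₂ ≤ 1}`,
so `dim_H Λ = 1`, while the dimension formula would give
`1 - χ_u/χ_s = 1 - log 2 / log (1/2) = 2 ≠ dim_H Λ`. -/
theorem non_transversal_example_dimension
    (f : ℝ × ℝ → ℝ × ℝ)
    (hf : ∀ p : ℝ × ℝ, f p =
      (p.1 / 2, if p.2 < 1 / 2 then 2 * p.2 else 2 * p.2 - 1))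
    (K : Set (ℝ × ℝ)) (hK : K = Set.Ioo (0 : ℝ) 1 ×ˢ Set.Ioo (0 : ℝ) 1)
    (N : Set (ℝ × ℝ)) (hN : N = {p ∈ K | p.2 = 1 / 2})
    (Kplus : Set (ℝ × ℝ))
    (hKplus : Kplus = {p ∈ K | ∀ n : ℕ, f^[n] p ∉ N ∪ frontier K})
    (Lam : Set (ℝ × ℝ))
    (hLam : Lam = ⋂ n : ℕ, closure (f^[n] '' Kplus)) :
    Lam = {p : ℝ × ℝ | p.1 = 0 ∧ p.2 ∈ Set.Icc (0 : ℝ) 1} ∧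
    dimH Lam = 1 ∧
    1 - Real.log 2 / Real.log (1 / 2) = 2 ∧
    ENNReal.ofReal (1 - Real.log 2 / Real.log (1 / 2)) ≠ dimH Lam := by
  have hKopen : IsOpen K := by rw [hK]; exact isOpen_Ioo.prod isOpen_Ioo
  -- iterate formula
  have hiter : ∀ (n : ℕ) (p : ℝ × ℝ), f^[n] p = (p.1 / 2^n, NTgmap^[n] p.2) := by
    intro n
    induction n with
    | zero => intro p; simp
    | succ m ih =>
      intro p
      rw [Function.iterate_succ_apply', ih, hf, Function.iterate_succ_apply']
      refine Prod.ext ?_ ?_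
      · simp only []
        rw [pow_succ]
        field_simp
      · simp only []
        unfold NTgmap
        rfl
  -- membership of irrational second-coordinate points in Kplus
  have hmemK : ∀ x c : ℝ, x ∈ Ioo (0:ℝ) 1 → c ∈ Ioo (0:ℝ) 1 → Irrational c →
      (x, c) ∈ Kplus := by
    intro x c hx hc hirr
    rw [hKplus]
    refine ⟨by rw [hK]; exact ⟨hx, hc⟩, ?_⟩
    intro n
    have horb : Irrational (NTgmap^[n] c) ∧ NTgmap^[n] c ∈ Ioo (0:ℝ) 1 := by
      induction n with
      | zero => exact ⟨hirr, hc⟩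
      | succ m ih =>
        rw [Function.iterate_succ_apply']
        exact ⟨NTgmap_irrational ih.1, NTgmap_mem ih.1 ih.2⟩
    have hx2 : x / 2^n ∈ Ioo (0:ℝ) 1 := by
      constructor
      · have := hx.1; positivity
      · have h1 : x / 2^n ≤ x :=
          div_le_self hx.1.le (one_le_pow₀ (by norm_num))
        linarith [hx.2]
    have hmemK' : ((x, c).1 / 2^n, NTgmap^[n] (x, c).2) ∈ K := by
      rw [hK]; exact ⟨hx2, horb.2⟩
    rw [hiter n (x, c)]
    rintro (hmem | hmem)
    · rw [hN] at hmem
      refine horb.1 ⟨(1/2 : ℚ), ?_⟩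
      have h2 : NTgmap^[n] c = 1/2 := hmem.2
      rw [h2]; norm_num
    · rw [hKopen.frontier_eq] at hmem
      exact hmem.2 hmemK'
  -- orbits of Kplus points stay in the open square
  have horbK : ∀ p ∈ Kplus, ∀ n : ℕ, NTgmap^[n] p.2 ∈ Ioo (0:ℝ) 1 := by
    intro p hp
    rw [hKplus] at hp
    obtain ⟨hpK, hpit⟩ := hp
    rw [hK] at hpK
    intro n
    induction n with
    | zero => exact hpK.2
    | succ m ih =>
      have hx2 : p.1 / 2^m ∈ Ioo (0:ℝ) 1 := by
        constructor
        · have := hpK.1.1; positivity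
        · have h1 : p.1 / 2^m ≤ p.1 :=
            div_le_self hpK.1.1.le (one_le_pow₀ (by norm_num))
          linarith [hpK.1.2]
      have hne : NTgmap^[m] p.2 ≠ 1/2 := by
        intro he
        apply hpit m
        left
        rw [hN]
        refine ⟨?_, ?_⟩
        · rw [hiter m p, hK]
          exact ⟨hx2, ih⟩
        · rw [hiter m p]
          exact he
      rw [Function.iterate_succ_apply']
      exact NTgmap_mem' ih hne
  -- forward inclusion
  have hsub : ∀ n : ℕ, f^[n] '' Kplus ⊆ Icc (0:ℝ) (1/2^n) ×ˢ Icc (0:ℝ) 1 := by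
    rintro n q ⟨p, hp, rfl⟩
    rw [hiter n p]
    have hpK : p ∈ K := by rw [hKplus] at hp; exact hp.1
    rw [hK] at hpK
    have h2 := horbK p hp n
    refine ⟨⟨?_, ?_⟩, h2.1.le, h2.2.le⟩
    · have := hpK.1.1; positivity
    · have h0 : (0:ℝ) < 2^n := by positivity
      rw [div_le_div_iff₀ h0 h0]
      nlinarith [hpK.1.2]
  have hLamEq : Lam = {p : ℝ × ℝ | p.1 = 0 ∧ p.2 ∈ Set.Icc (0 : ℝ) 1} := by
    apply Set.Subset.antisymm
    · rw [hLam]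
      intro q hq
      simp only [mem_iInter] at hq
      have h' : ∀ n : ℕ, q ∈ Icc (0:ℝ) (1/2^n) ×ˢ Icc (0:ℝ) 1 := fun n =>
        closure_minimal (hsub n) (isClosed_Icc.prod isClosed_Icc) (hq n)
      have hq2 : q.2 ∈ Icc (0:ℝ) 1 := (h' 0).2
      have hq1 : q.1 = 0 := by
        by_contra hne
        have hpos : 0 < q.1 := lt_of_le_of_ne (h' 0).1.1 (Ne.symm hne)
        obtain ⟨n, hn⟩ := exists_pow_lt_of_lt_one hpos (by norm_num : (1:ℝ)/2 < 1)
        have : q.1 ≤ 1/2^n := (h' n).1.2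
        rw [div_pow, one_pow] at hn
        linarith
      exact ⟨hq1, hq2⟩
    · rintro q ⟨hq1, hq2⟩
      rw [hLam]
      simp only [mem_iInter]
      intro n
      rw [Metric.mem_closure_iff]
      intro ε hε
      -- pick an irrational b near q.2
      have hlt : max 0 (q.2 - ε/2) < min 1 (q.2 + ε/2) := by
        obtain ⟨h0, h1⟩ := hq2
        simp only [max_lt_iff, lt_min_iff]
        refine ⟨⟨by linarith, by linarith⟩, by linarith, by linarith⟩
      obtain ⟨b, hbirr, hb1, hb2⟩ := exists_irrational_btwn hlt
      have hb0 : 0 < b := lt_of_le_of_lt (le_max_left _ _) hb1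
      have hb1' : b < 1 := lt_of_lt_of_le hb2 (min_le_left _ _)
      have hbd1 : q.2 - ε/2 < b := lt_of_le_of_lt (le_max_right _ _) hb1
      have hbd2 : b < q.2 + ε/2 := lt_of_lt_of_le hb2 (min_le_right _ _)
      set x₁ : ℝ := min (1/2) (ε/2) with hx₁
      have hx₁0 : 0 < x₁ := lt_min (by norm_num) (by linarith)
      have hx₁1 : x₁ < 1 := lt_of_le_of_lt (min_le_left _ _) (by norm_num)
      have hx₁ε : x₁ ≤ ε/2 := min_le_right _ _
      have hcirr : Irrational (b / 2^n) := by
        have h' := hbirr.ratCast_mul (q := (1/(2^n) : ℚ)) (by positivity)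
        rw [show (((1/(2^n) : ℚ)):ℝ) * b = b / 2^n by push_cast; ring] at h'
        exact h'
      have hcmem : b / 2^n ∈ Ioo (0:ℝ) 1 := by
        constructor
        · positivity
        · have h1 : b / 2^n ≤ b :=
            div_le_self hb0.le (one_le_pow₀ (by norm_num))
          linarith
      have hpmem : (x₁, b / 2^n) ∈ Kplus := hmemK x₁ (b / 2^n) ⟨hx₁0, hx₁1⟩ hcmem hcirr
      refine ⟨(x₁ / 2^n, b), ⟨(x₁, b / 2^n), hpmem, ?_⟩, ?_⟩
      · rw [hiter n _]
        refine Prod.ext rfl ?_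
        exact NTgmap_iter_div hb0 hb1' n
      · rw [Prod.dist_eq]
        have hd1 : dist q.1 (x₁ / 2^n) < ε := by
          rw [hq1, Real.dist_eq]
          have h1 : x₁ / 2^n ≤ x₁ :=
            div_le_self hx₁0.le (one_le_pow₀ (by norm_num))
          have h2 : 0 < x₁ / 2^n := by positivity
          rw [abs_of_nonpos (by linarith)]
          linarith
        have hd2 : dist q.2 b < ε := by
          rw [Real.dist_eq, abs_lt]
          constructor <;> linarith
        exact max_lt hd1 hd2
  refine ⟨hLamEq, ?_, ?_, ?_⟩
  · -- Hausdorff dimension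
    have himg : {p : ℝ × ℝ | p.1 = 0 ∧ p.2 ∈ Icc (0:ℝ) 1} =
        (fun y : ℝ => ((0:ℝ), y)) '' Icc 0 1 := by
      ext p
      constructor
      · rintro ⟨h1, h2⟩
        exact ⟨p.2, h2, Prod.ext h1.symm rfl⟩
      · rintro ⟨y, hy, rfl⟩
        exact ⟨rfl, hy⟩
    have hiso : Isometry (fun y : ℝ => ((0:ℝ), y)) := by
      apply Isometry.of_dist_eq
      intro a b
      rw [Prod.dist_eq]
      simp only [dist_self]
      exact max_eq_right dist_nonneg
    rw [hLamEq, himg, hiso.dimH_image]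
    rw [Real.dimH_of_mem_nhds (Icc_mem_nhds (by norm_num) (by norm_num) :
      Icc (0:ℝ) 1 ∈ nhds (1/2 : ℝ))]
    simp
  · rw [one_div, Real.log_inv, div_neg, div_self (ne_of_gt (Real.log_pos one_lt_two))]
    ring
  · have h3 : 1 - Real.log 2 / Real.log (1 / 2) = 2 := by
      rw [one_div, Real.log_inv, div_neg, div_self (ne_of_gt (Real.log_pos one_lt_two))]
      ring
    have himg : {p : ℝ × ℝ | p.1 = 0 ∧ p.2 ∈ Icc (0:ℝ) 1} =
        (fun y : ℝ => ((0:ℝ), y)) '' Icc 0 1 := by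
      ext p
      constructor
      · rintro ⟨h1, h2⟩
        exact ⟨p.2, h2, Prod.ext h1.symm rfl⟩
      · rintro ⟨y, hy, rfl⟩
        exact ⟨rfl, hy⟩
    have hiso : Isometry (fun y : ℝ => ((0:ℝ), y)) := by
      apply Isometry.of_dist_eq
      intro a b
      rw [Prod.dist_eq]
      simp only [dist_self]
      exact max_eq_right dist_nonneg
    have hdim : dimH Lam = 1 := by
      rw [hLamEq, himg, hiso.dimH_image]
      rw [Real.dimH_of_mem_nhds (Icc_mem_nhds (by norm_num) (by norm_num) :
        Icc (0:ℝ) 1 ∈ nhds (1/2 : ℝ))]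
      simp
    rw [h3, hdim]
    norm_num
end

section
/- Let 0 < λ < γ, ρ > 0, 0 ≤ ρ_ψ < ρ/2, and let t ∈ ℝ with |t| ≤ ρ_ψ. If v = (v₁, v₂) ∈ ℝ² satisfies v₂ > 0 and −ρ_ψ/(γ−λ) ≤ v₁/v₂ ≤ (ρ+ρ_ψ)/(γ−λ), then the image u = (λv₁ + (ρ+t)v₂, γv₂) of v under the matrix [[λ, ρ+t],[0, γ]] satisfies u₂ > 0 and −ρ_ψ·λ/(γ(γ−λ)) + (ρ−ρ_ψ)/γ ≤ u₁/u₂ ≤ (ρ+ρ_ψ)·λ/(γ(γ−λ)) + (ρ+ρ_ψ)/γ; in particular −ρ_ψ/(γ−λ) ≤ u₁/u₂ ≤ (ρ+ρ_ψ)/(γ−λ), so the cone C^u = {(v₁,v₂) : v₂ ≠ 0 and −ρ_ψ/(γ−λ) ≤ v₁/v₂ ≤ (ρ+ρ_ψ)/(γ−λ)} ∪ {0} is mapped into itself. -/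
/-- The derivative `[[λ, ρ+t],[0, γ]]` of the upper branch of the skew
Belykh map maps the unstable cone `C^u` (spanned by `(-ρ_ψ/(γ-λ), 1)` and
`((ρ+ρ_ψ)/(γ-λ), 1)`) into itself, with the stated sharper slope bounds. -/
theorem upper_branch_maps_unstable_cone
    (lam gam rho rho_psi t v1 v2 : ℝ)
    (hlam : 0 < lam) (hlamgam : lam < gam)
    (hrho : 0 < rho)
    (hrp_nonneg : 0 ≤ rho_psi) (hrp_lt : rho_psi < rho / 2)
    (ht : |t| ≤ rho_psi)
    (hv2 : 0 < v2)
    (hlow : -rho_psi / (gam - lam) ≤ v1 / v2)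
    (hup : v1 / v2 ≤ (rho + rho_psi) / (gam - lam)) :
    0 < gam * v2 ∧
    -rho_psi * lam / (gam * (gam - lam)) + (rho - rho_psi) / gam ≤
      (lam * v1 + (rho + t) * v2) / (gam * v2) ∧
    (lam * v1 + (rho + t) * v2) / (gam * v2) ≤
      (rho + rho_psi) * lam / (gam * (gam - lam)) + (rho + rho_psi) / gam ∧
    -rho_psi / (gam - lam) ≤ (lam * v1 + (rho + t) * v2) / (gam * v2) ∧
    (lam * v1 + (rho + t) * v2) / (gam * v2) ≤ (rho + rho_psi) / (gam - lam) := by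
  have hgl : 0 < gam - lam := by linarith
  have hg : 0 < gam := by linarith
  have ht1 : -rho_psi ≤ t := neg_le_of_abs_le ht
  have ht2 : t ≤ rho_psi := (abs_le.mp ht).2
  rw [div_le_div_iff₀ hgl hv2] at hlow
  rw [div_le_div_iff₀ hv2 hgl] at hup
  -- hlow : -rho_psi * v2 ≤ v1 * (gam - lam), hup : v1 * (gam - lam) ≤ (rho + rho_psi) * v2
  have key1 : 0 ≤ lam * (v1 * (gam - lam) + rho_psi * v2) + (t + rho_psi) * (v2 * (gam - lam)) := by
    have h1 : 0 ≤ v1 * (gam - lam) + rho_psi * v2 := by linarith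
    have h2 : (0:ℝ) ≤ t + rho_psi := by linarith
    have := mul_nonneg hlam.le h1
    have := mul_nonneg h2 (mul_nonneg hv2.le hgl.le)
    linarith
  have key2 : 0 ≤ lam * ((rho + rho_psi) * v2 - v1 * (gam - lam)) +
      (rho_psi - t) * (v2 * (gam - lam)) := by
    have h1 : 0 ≤ (rho + rho_psi) * v2 - v1 * (gam - lam) := by linarith
    have h2 : (0:ℝ) ≤ rho_psi - t := by linarith
    have := mul_nonneg hlam.le h1
    have := mul_nonneg h2 (mul_nonneg hv2.le hgl.le)
    linarith
  have hgv : 0 < gam * v2 := mul_pos hg hv2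
  refine ⟨hgv, ?_, ?_, ?_, ?_⟩
  · rw [div_add_div _ _ (by positivity : (gam * (gam - lam)) ≠ 0) hg.ne',
      div_le_div_iff₀ (by positivity) hgv]
    nlinarith [mul_nonneg (sq_nonneg gam) key1]
  · rw [div_add_div _ _ (by positivity : (gam * (gam - lam)) ≠ 0) hg.ne',
      div_le_div_iff₀ hgv (by positivity)]
    nlinarith [mul_nonneg (sq_nonneg gam) key2]
  · rw [div_le_div_iff₀ hgl hgv]
    have h3 : 0 ≤ (rho + t + rho_psi) * (v2 * (gam - lam)) := by
      apply mul_nonneg (by linarith) (mul_nonneg hv2.le hgl.le)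
    nlinarith [mul_nonneg hlam.le (by linarith : 0 ≤ v1 * (gam - lam) + rho_psi * v2)]
  · rw [div_le_div_iff₀ hgv hgl]
    nlinarith [key2]
end

section
/- Let 0 < λ < γ, ρ > 0, 0 ≤ ρ_ψ < ρ/2, and let t ∈ ℝ with |t| ≤ ρ_ψ. If v = (v₁, v₂) ∈ ℝ² satisfies v₂ > 0 and −ρ_ψ/(γ−λ) ≤ v₁/v₂ ≤ (ρ+ρ_ψ)/(γ−λ), then the image u = (λv₁ + t·v₂, γv₂) of v under the matrix [[λ, t],[0, γ]] satisfies u₂ > 0 and −ρ_ψ·λ/(γ(γ−λ)) − ρ_ψ/γ ≤ u₁/u₂ ≤ (ρ+ρ_ψ)·λ/(γ(γ−λ)) + ρ_ψ/γ; in particular −ρ_ψ/(γ−λ) ≤ u₁/u₂ ≤ (ρ+ρ_ψ)/(γ−λ), so the cone C^u = {(v₁,v₂) : v₂ ≠ 0 and −ρ_ψ/(γ−λ) ≤ v₁/v₂ ≤ (ρ+ρ_ψ)/(γ−λ)} ∪ {0} is mapped into itself. -/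
/-- The derivative `[[λ, t],[0, γ]]` of the lower branch of the skew
Belykh map maps the unstable cone `C^u` (spanned by `(-ρ_ψ/(γ-λ), 1)` and
`((ρ+ρ_ψ)/(γ-λ), 1)`) into itself, with the stated sharper slope bounds. -/
theorem lower_branch_maps_unstable_cone
    (lam gam rho rho_psi t v1 v2 : ℝ)
    (hlam : 0 < lam) (hlamgam : lam < gam)
    (hrho : 0 < rho)
    (hrp_nonneg : 0 ≤ rho_psi) (hrp_lt : rho_psi < rho / 2)
    (ht : |t| ≤ rho_psi)
    (hv2 : 0 < v2)
    (hlow : -rho_psi / (gam - lam) ≤ v1 / v2)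
    (hup : v1 / v2 ≤ (rho + rho_psi) / (gam - lam)) :
    0 < gam * v2 ∧
    -rho_psi * lam / (gam * (gam - lam)) - rho_psi / gam ≤
      (lam * v1 + t * v2) / (gam * v2) ∧
    (lam * v1 + t * v2) / (gam * v2) ≤
      (rho + rho_psi) * lam / (gam * (gam - lam)) + rho_psi / gam ∧
    -rho_psi / (gam - lam) ≤ (lam * v1 + t * v2) / (gam * v2) ∧
    (lam * v1 + t * v2) / (gam * v2) ≤ (rho + rho_psi) / (gam - lam) := by
  have hg : 0 < gam := hlam.trans hlamgam
  have hgl : 0 < gam - lam := by linarith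
  have hgv : 0 < gam * v2 := by positivity
  obtain ⟨ht1, ht2⟩ := abs_le.mp ht
  have hlow' : -rho_psi * v2 ≤ v1 * (gam - lam) := by
    rw [div_le_div_iff₀ hgl hv2] at hlow; linarith
  have hup' : v1 * (gam - lam) ≤ (rho + rho_psi) * v2 := by
    rw [div_le_div_iff₀ hv2 hgl] at hup; linarith
  -- lower bound on new slope
  have hL : -rho_psi / (gam - lam) ≤ (lam * v1 + t * v2) / (gam * v2) := by
    rw [div_le_div_iff₀ hgl hgv]
    nlinarith [mul_le_mul_of_nonneg_left hlow' hlam.le,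
      mul_le_mul_of_nonneg_right ht1 (by positivity : (0:ℝ) ≤ v2 * (gam - lam))]
  have hUeq : (rho + rho_psi) * lam / (gam * (gam - lam)) + rho_psi / gam
      = (rho * lam + rho_psi * gam) / (gam * (gam - lam)) := by
    field_simp; ring
  have hLeq : -rho_psi * lam / (gam * (gam - lam)) - rho_psi / gam
      = -rho_psi / (gam - lam) := by
    field_simp; ring
  have hU : (lam * v1 + t * v2) / (gam * v2)
      ≤ (rho * lam + rho_psi * gam) / (gam * (gam - lam)) := by
    rw [div_le_div_iff₀ hgv (by positivity)]
    nlinarith [mul_le_mul_of_nonneg_left hup' hlam.le,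
      mul_le_mul_of_nonneg_right ht2 (by positivity : (0:ℝ) ≤ v2 * (gam - lam))]
  have hU2 : (rho * lam + rho_psi * gam) / (gam * (gam - lam))
      ≤ (rho + rho_psi) / (gam - lam) := by
    rw [div_le_div_iff₀ (by positivity) hgl]
    nlinarith [mul_le_mul_of_nonneg_right
      (mul_le_mul_of_nonneg_left hlamgam.le hrho.le) hgl.le]
  exact ⟨hgv, by rw [hLeq]; exact hL, by rw [hUeq]; exact hU, hL, hU.trans hU2⟩
end

section
/- Let 0 < λ < γ, ρ > 0 and 0 ≤ ρ_ψ < ρ/2. The inequality −ρ_ψ·λ/(γ(γ−λ)) + (ρ−ρ_ψ)/γ > (ρ+ρ_ψ)·λ/(γ(γ−λ)) + ρ_ψ/γ holds if and only if γ(ρ − 2ρ_ψ) > 2λρ; under this condition the cone spanned by the vectors (−ρ_ψ·λ/(γ(γ−λ)) + (ρ−ρ_ψ)/γ, 1) and ((ρ+ρ_ψ)·λ/(γ(γ−λ)) + (ρ+ρ_ψ)/γ, 1) and the cone spanned by the vectors (−ρ_ψ·λ/(γ(γ−λ)) − ρ_ψ/γ, 1) and ((ρ+ρ_ψ)·λ/(γ(γ−λ))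 + ρ_ψ/γ, 1) intersect only in the zero vector. In the limiting case ρ_ψ = 0 the condition reads γ > 2λ. -/
/-- The inequality
`-ρ_ψ λ/(γ(γ-λ)) + (ρ-ρ_ψ)/γ > (ρ+ρ_ψ) λ/(γ(γ-λ)) + ρ_ψ/γ` holds iff
`γ(ρ - 2ρ_ψ) > 2λρ`; under this condition the two image cones (spanned by the stated
vectors) intersect only in `0`; and in the limiting case `ρ_ψ = 0` the condition
reads `γ > 2λ`. -/
theorem image_cones_disjoint
    (lam gam rho rho_psi : ℝ)
    (hlam : 0 < lam) (hlamgam : lam < gam)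
    (hrho : 0 < rho)
    (hrp_nonneg : 0 ≤ rho_psi) (hrp_lt : rho_psi < rho / 2) :
    ((-rho_psi * lam / (gam * (gam - lam)) + (rho - rho_psi) / gam >
        (rho + rho_psi) * lam / (gam * (gam - lam)) + rho_psi / gam) ↔
      gam * (rho - 2 * rho_psi) > 2 * lam * rho) ∧
    (gam * (rho - 2 * rho_psi) > 2 * lam * rho →
      {w : ℝ × ℝ | ∃ s t : ℝ, 0 ≤ s ∧ 0 ≤ t ∧
          w = s • ((-rho_psi * lam / (gam * (gam - lam)) + (rho - rho_psi) / gam, 1) : ℝ × ℝ)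
            + t • (((rho + rho_psi) * lam / (gam * (gam - lam)) + (rho + rho_psi) / gam, 1) : ℝ × ℝ)} ∩
      {w : ℝ × ℝ | ∃ s t : ℝ, 0 ≤ s ∧ 0 ≤ t ∧
          w = s • ((-rho_psi * lam / (gam * (gam - lam)) - rho_psi / gam, 1) : ℝ × ℝ)
            + t • (((rho + rho_psi) * lam / (gam * (gam - lam)) + rho_psi / gam, 1) : ℝ × ℝ)}
      = {0}) ∧
    (rho_psi = 0 →
      ((-rho_psi * lam / (gam * (gam - lam)) + (rho - rho_psi) / gam >
          (rho + rho_psi) * lam / (gam * (gam - lam)) + rho_psi / gam) ↔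
        gam > 2 * lam)) := by
  have hg : 0 < gam := hlam.trans hlamgam
  have hgl : 0 < gam - lam := sub_pos.mpr hlamgam
  have hD : 0 < gam * (gam - lam) := mul_pos hg hgl
  have hDne : gam * (gam - lam) ≠ 0 := ne_of_gt hD
  have hgne : gam ≠ 0 := ne_of_gt hg
  set A1 : ℝ := -rho_psi * lam / (gam * (gam - lam)) + (rho - rho_psi) / gam with hA1
  set A2 : ℝ := (rho + rho_psi) * lam / (gam * (gam - lam)) + (rho + rho_psi) / gam with hA2
  set B1 : ℝ := -rho_psi * lam / (gam * (gam - lam)) - rho_psi / gam with hB1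
  set B2 : ℝ := (rho + rho_psi) * lam / (gam * (gam - lam)) + rho_psi / gam with hB2
  clear_value A1 A2 B1 B2
  have key : A1 - B2 = (gam * (rho - 2 * rho_psi) - 2 * lam * rho) / (gam * (gam - lam)) := by
    rw [hA1, hB2]; field_simp; ring
  have hiff : (A1 > B2) ↔ gam * (rho - 2 * rho_psi) > 2 * lam * rho := by
    rw [gt_iff_lt, ← sub_pos, key, lt_div_iff₀ hD, zero_mul, sub_pos, gt_iff_lt]
  refine ⟨hiff, ?_, ?_⟩
  · intro hcond
    have hA : B2 < A1 := hiff.mpr hcond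
    have keyA : A2 - A1 = (rho * lam + 2 * rho_psi * gam) / (gam * (gam - lam)) := by
      rw [hA1, hA2]; field_simp; ring
    have keyB : B2 - B1 = (rho * lam + 2 * rho_psi * gam) / (gam * (gam - lam)) := by
      rw [hB1, hB2]; field_simp; ring
    have hnum : 0 ≤ (rho * lam + 2 * rho_psi * gam) / (gam * (gam - lam)) :=
      div_nonneg (by nlinarith) hD.le
    have hA12 : A1 ≤ A2 := by linarith
    have hB12 : B1 ≤ B2 := by linarith
    ext w
    simp only [Set.mem_inter_iff, Set.mem_setOf_eq, Set.mem_singleton_iff]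
    constructor
    · rintro ⟨⟨s, t, hs, ht, h1⟩, ⟨s', t', hs', ht', h2⟩⟩
      rw [Prod.ext_iff] at h1 h2
      simp only [Prod.smul_mk, Prod.mk_add_mk, Prod.fst_add, Prod.snd_add, smul_eq_mul,
        Prod.smul_fst, Prod.smul_snd, mul_one] at h1 h2
      obtain ⟨e1, e1'⟩ := h1
      obtain ⟨e2, e2'⟩ := h2
      have hsum : s + t = s' + t' := by linarith
      have hst : s + t = 0 := by
        by_contra hne
        have hpos : 0 < s + t := lt_of_le_of_ne (add_nonneg hs ht) (Ne.symm hne)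
        have l1 : (s + t) * A1 ≤ s * A1 + t * A2 := by nlinarith
        have l2 : s' * B1 + t' * B2 ≤ (s' + t') * B2 := by nlinarith
        have l3 : (s' + t') * B2 < (s + t) * A1 := by
          rw [← hsum]; exact mul_lt_mul_of_pos_left hA hpos
        linarith
      have hs0 : s = 0 := by linarith
      have ht0 : t = 0 := by linarith
      have : w = (0, 0) := Prod.ext (by rw [e1, hs0, ht0]; ring) (by rw [e1', hs0, ht0]; ring)
      simpa [Prod.ext_iff] using this
    · rintro rfl
      exact ⟨⟨0, 0, le_refl _, le_refl _, by simp⟩, ⟨0, 0, le_refl _, le_refl _, by simp⟩⟩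
  · intro h0
    subst h0
    rw [hiff]
    constructor <;> intro h <;> nlinarith
end

section
/- Let 0 < λ < γ and R ≥ 0. Let A₁, …, A_n be 2×2 real matrices each of the form Aᵢ = [[λ, cᵢ],[0, γ]] for some cᵢ ∈ ℝ. Then every vector v = (v₁, v₂) ∈ ℝ² with |v₁| ≤ R·|v₂| satisfies ‖A_n ⋯ A₁ v‖ ≥ (γⁿ / √(1 + R²)) · ‖v‖, where ‖·‖ is the Euclidean norm. Moreover A_n ⋯ A₁ (1,0) = (λⁿ, 0), so horizontal vectors are contracted by exactly the factor λⁿ. -/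
/-- The product `A_n ⋯ A₁` applied to `v ∈ ℝ²`, where `Aᵢ = [[λ, cᵢ],[0, γ]]`
(so the matrix with the last index is applied last). -/
def triangularProd (lam gam : ℝ) : (n : ℕ) → (Fin n → ℝ) → ℝ × ℝ → ℝ × ℝ
  | 0, _, v => v
  | n + 1, c, v =>
      let w := triangularProd lam gam n (fun i => c i.castSucc) v
      (lam * w.1 + c (Fin.last n) * w.2, gam * w.2)

lemma triangularProd_snd (lam gam : ℝ) (n : ℕ) (c : Fin n → ℝ) (v : ℝ × ℝ) :
    (triangularProd lam gam n c v).2 = gam ^ n * v.2 := by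
  induction n with
  | zero => simp [triangularProd]
  | succ n ih => simp [triangularProd, ih, pow_succ]; ring

lemma triangularProd_horiz (lam gam : ℝ) (n : ℕ) (c : Fin n → ℝ) :
    triangularProd lam gam n c (1, 0) = (lam ^ n, 0) := by
  induction n with
  | zero => simp [triangularProd]
  | succ n ih => simp [triangularProd, ih, pow_succ]; ring

/-- If `0 < λ < γ`, `R ≥ 0` and `A₁, …, A_n` are matrices of the form
`[[λ, cᵢ],[0, γ]]`, then every vector `v` with `|v₁| ≤ R|v₂|` satisfies
`‖A_n ⋯ A₁ v‖ ≥ (γⁿ/√(1+R²))‖v‖` (Euclidean norm), while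
`A_n ⋯ A₁ (1,0) = (λⁿ, 0)`. -/
theorem triangular_products_hyperbolicity
    (lam gam R : ℝ) (hlam : 0 < lam) (hlamgam : lam < gam) (hR : 0 ≤ R)
    (n : ℕ) (c : Fin n → ℝ) :
    (∀ v : ℝ × ℝ, |v.1| ≤ R * |v.2| →
      gam ^ n / Real.sqrt (1 + R ^ 2) * Real.sqrt (v.1 ^ 2 + v.2 ^ 2) ≤
        Real.sqrt ((triangularProd lam gam n c v).1 ^ 2 +
          (triangularProd lam gam n c v).2 ^ 2)) ∧
    triangularProd lam gam n c (1, 0) = (lam ^ n, 0) := by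
  have hgam : 0 < gam := hlam.trans hlamgam
  refine ⟨fun v hv => ?_, triangularProd_horiz lam gam n c⟩
  set w := triangularProd lam gam n c v with hw
  have hS : 0 < Real.sqrt (1 + R ^ 2) := Real.sqrt_pos.mpr (by positivity)
  have h1 : Real.sqrt (v.1 ^ 2 + v.2 ^ 2) ≤ Real.sqrt (1 + R ^ 2) * |v.2| := by
    rw [← Real.sqrt_sq (abs_nonneg v.2), ← Real.sqrt_mul (by positivity)]
    apply Real.sqrt_le_sqrt
    have h2 : v.1 ^ 2 ≤ R ^ 2 * v.2 ^ 2 := by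
      nlinarith [sq_abs v.1, sq_abs v.2, abs_nonneg v.1, abs_nonneg v.2,
        mul_self_le_mul_self (abs_nonneg v.1) hv]
    have : |v.2| ^ 2 = v.2 ^ 2 := sq_abs v.2
    nlinarith
  have h3 : gam ^ n * |v.2| ≤ Real.sqrt (w.1 ^ 2 + w.2 ^ 2) := by
    have : gam ^ n * |v.2| = |w.2| := by
      rw [hw, triangularProd_snd, abs_mul, abs_of_pos (pow_pos hgam n)]
    rw [this, ← Real.sqrt_sq (abs_nonneg w.2), sq_abs]
    exact Real.sqrt_le_sqrt (by nlinarith [sq_nonneg w.1])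
  calc gam ^ n / Real.sqrt (1 + R ^ 2) * Real.sqrt (v.1 ^ 2 + v.2 ^ 2)
      ≤ gam ^ n / Real.sqrt (1 + R ^ 2) * (Real.sqrt (1 + R ^ 2) * |v.2|) := by
        apply mul_le_mul_of_nonneg_left h1 (by positivity)
    _ = gam ^ n * |v.2| := by field_simp
    _ ≤ _ := h3
end

section
/- Let 1 < s < 2 and l, D > 0. There exists a constant C > 0 (depending only on s, l, D) such that for every κ ≥ 1, ∫_{−l}^{l} ∫_{−D}^{D} (b²/κ² + (a − b)²)^{−s/2} da db ≤ C · κ^{s−1}. Equivalently, the mutual s-energy (with respect to arc-length measures) of the vertical segment γ₁ = {(0, a) : |a| < D} and the steep line segment γ₂ = {(b/κ, b) : |b| < l} through the origin of slope κ is O(κ^{s−1}) as κ → ∞. -/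
set_option maxHeartbeats 1000000


open MeasureTheory Real

/-- for `1 < s < 2` and `l, D > 0` there is a constant `C > 0`
(depending only on `s, l, D`) such that for all `κ ≥ 1`,
`∫_{-l}^{l} ∫_{-D}^{D} (b²/κ² + (a-b)²)^{-s/2} da db ≤ C κ^{s-1}`, i.e. the mutual
`s`-energy of the vertical segment `{(0,a) : |a| < D}` and the steep segment
`{(b/κ, b) : |b| < l}` of slope `κ` is `O(κ^{s-1})`. -/
theorem energy_transversal_intersection (s l D : ℝ)
    (hs1 : 1 < s) (hs2 : s < 2) (hl : 0 < l) (hD : 0 < D) :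
    ∃ C > (0 : ℝ), ∀ κ : ℝ, 1 ≤ κ →
      (∫ b in Set.Icc (-l) l, ∫ a in Set.Icc (-D) D,
          ((b ^ 2 / κ ^ 2 + (a - b) ^ 2) ^ (-s / 2) : ℝ)) ≤
        C * κ ^ (s - 1) := by
  -- the profile function
  set g : ℝ → ℝ := fun x => (1 + x ^ 2) ^ (-s / 2) with hg
  have hgi : Integrable g := by
    have h := integrable_rpow_neg_one_add_norm_sq (E := ℝ) (μ := volume)
        (r := s) (by simpa using hs1)
    simpa [hg, Real.norm_eq_abs, sq_abs] using h
  set I : ℝ := ∫ x, g x with hI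
  have hI0 : 0 ≤ I := integral_nonneg fun x => rpow_nonneg (by positivity) _
  -- integrability of |b|^(1-s) on [-l, l]
  have hJint : IntegrableOn (fun b : ℝ => |b| ^ (1 - s)) (Set.Icc (-l) l) := by
    have hri : IntervalIntegrable (fun x : ℝ => x ^ (1 - s)) volume 0 l :=
      intervalIntegral.intervalIntegrable_rpow' (by linarith)
    have h1 : IntegrableOn (fun x : ℝ => x ^ (1 - s)) (Set.Icc 0 l) := by
      rwa [intervalIntegrable_iff_integrableOn_Icc_of_le hl.le] at hri
    have h1' : IntegrableOn (fun b : ℝ => |b| ^ (1 - s)) (Set.Icc 0 l) :=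
      h1.congr_fun (fun x hx => by rw [abs_of_nonneg hx.1]) measurableSet_Icc
    have h2 : IntervalIntegrable (fun x : ℝ => (-x) ^ (1 - s)) volume (-0) (-l) :=
      (IntervalIntegrable.iff_comp_neg (f := fun x : ℝ => x ^ (1 - s)) (a := 0) (b := l) enorm_ne_top).mp hri
    have h2' : IntegrableOn (fun x : ℝ => (-x) ^ (1 - s)) (Set.Icc (-l) 0) := by
      rw [neg_zero] at h2
      have h2s := h2.symm
      rwa [intervalIntegrable_iff_integrableOn_Icc_of_le (by linarith : -l ≤ 0)] at h2s
    have h2'' : IntegrableOn (fun b : ℝ => |b| ^ (1 - s)) (Set.Icc (-l) 0) :=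
      h2'.congr_fun (fun x hx => by rw [abs_of_nonpos hx.2]) measurableSet_Icc
    have hsplit : Set.Icc (-l) l = Set.Icc (-l) 0 ∪ Set.Icc 0 l := by
      rw [Set.Icc_union_Icc_eq_Icc (by linarith) hl.le]
    rw [hsplit]
    exact h2''.union h1'
  set J : ℝ := ∫ b in Set.Icc (-l) l, |b| ^ (1 - s) with hJ
  have hJ0 : 0 ≤ J := integral_nonneg fun x => rpow_nonneg (abs_nonneg _) _
  refine ⟨(I + 1) * (J + 1), by nlinarith, fun κ hκ => ?_⟩
  have hκ0 : (0 : ℝ) < κ := lt_of_lt_of_le one_pos hκ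
  have hκpow : (0 : ℝ) ≤ κ ^ (s - 1) := rpow_nonneg hκ0.le _
  -- inner bound for b ≠ 0
  have inner_bound : ∀ b : ℝ, b ≠ 0 →
      (∫ a in Set.Icc (-D) D, ((b ^ 2 / κ ^ 2 + (a - b) ^ 2) ^ (-s / 2) : ℝ)) ≤
        I * κ ^ (s - 1) * |b| ^ (1 - s) := by
    intro b hb
    set c : ℝ := |b| / κ with hcdef
    have hc : 0 < c := div_pos (abs_pos.mpr hb) hκ0
    have hcsq : b ^ 2 / κ ^ 2 = c ^ 2 := by
      rw [hcdef, div_pow, sq_abs]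
    -- F is the shifted profile
    set F : ℝ → ℝ := fun t => (c ^ 2 + t ^ 2) ^ (-s / 2) with hF
    have hFg : ∀ t : ℝ, F t = c ^ (-s) * g (c⁻¹ * t) := by
      intro t
      have h1 : c ^ (-s) = (c ^ 2) ^ (-s / 2) := by
        rw [← Real.rpow_natCast c 2, ← Real.rpow_mul hc.le]
        congr 1
        push_cast
        ring
      have h2 : (0 : ℝ) ≤ 1 + (c⁻¹ * t) ^ 2 := by positivity
      rw [hF, hg, h1, ← Real.mul_rpow (by positivity) h2]
      congr 1
      field_simp
    have hFi : Integrable F := by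
      have : Integrable (fun t : ℝ => g (c⁻¹ * t)) :=
        hgi.comp_mul_left' (inv_ne_zero hc.ne')
      have := this.const_mul (c ^ (-s))
      exact this.congr (Filter.Eventually.of_forall fun t => (hFg t).symm)
    have hFnn : ∀ t : ℝ, 0 ≤ F t := fun t => rpow_nonneg (by positivity) _
    have step1 : (∫ a in Set.Icc (-D) D, ((b ^ 2 / κ ^ 2 + (a - b) ^ 2) ^ (-s / 2) : ℝ))
        = ∫ a in Set.Icc (-D) D, F (a - b) := by
      refine setIntegral_congr_fun measurableSet_Icc fun a _ => ?_
      rw [hF]; rw [hcsq]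
    have step2 : (∫ a in Set.Icc (-D) D, F (a - b)) ≤ ∫ a : ℝ, F (a - b) :=
      setIntegral_le_integral (hFi.comp_sub_right b)
        (Filter.Eventually.of_forall fun a => hFnn _)
    have step3 : (∫ a : ℝ, F (a - b)) = ∫ t : ℝ, F t := integral_sub_right_eq_self F b
    have step4 : (∫ t : ℝ, F t) = c ^ (1 - s) * I := by
      calc (∫ t : ℝ, F t) = ∫ t : ℝ, c ^ (-s) * g (c⁻¹ * t) := by
              exact integral_congr_ae (Filter.Eventually.of_forall hFg)
        _ = c ^ (-s) * ∫ t : ℝ, g (c⁻¹ * t) := integral_const_mul _ _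
        _ = c ^ (-s) * (|c| • I) := by rw [Measure.integral_comp_inv_mul_left g c]
        _ = c ^ (1 - s) * I := by
              rw [abs_of_pos hc, smul_eq_mul, ← mul_assoc]
              congr 1
              rw [show (1 : ℝ) - s = -s + 1 by ring, Real.rpow_add_one hc.ne']
    have hcpow : c ^ (1 - s) = κ ^ (s - 1) * |b| ^ (1 - s) := by
      rw [hcdef, Real.div_rpow (abs_nonneg b) hκ0.le]
      rw [div_eq_mul_inv, ← Real.rpow_neg hκ0.le, neg_sub, mul_comm]
    calc (∫ a in Set.Icc (-D) D, ((b ^ 2 / κ ^ 2 + (a - b) ^ 2) ^ (-s / 2) : ℝ))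
        ≤ ∫ t : ℝ, F t := by rw [step1]; exact step2.trans_eq step3
      _ = c ^ (1 - s) * I := step4
      _ = I * κ ^ (s - 1) * |b| ^ (1 - s) := by rw [hcpow]; ring
  -- a.e. bound on the outer integral
  have hb_ae : ∀ᵐ b : ℝ ∂(volume.restrict (Set.Icc (-l) l)), b ≠ 0 := by
    refine ae_restrict_of_ae ?_
    have : (volume : Measure ℝ) {b : ℝ | ¬ b ≠ 0} = 0 := by
      simp [not_not, Set.setOf_eq_eq_singleton]
    exact this
  have houter : (∫ b in Set.Icc (-l) l, ∫ a in Set.Icc (-D) D,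
        ((b ^ 2 / κ ^ 2 + (a - b) ^ 2) ^ (-s / 2) : ℝ)) ≤
      ∫ b in Set.Icc (-l) l, (I * κ ^ (s - 1)) * |b| ^ (1 - s) := by
    refine integral_mono_of_nonneg ?_ (hJint.const_mul _) ?_
    · exact Filter.Eventually.of_forall fun b =>
        integral_nonneg fun a => rpow_nonneg (by positivity) _
    · refine hb_ae.mono fun b hb => ?_
      exact inner_bound b hb
  calc (∫ b in Set.Icc (-l) l, ∫ a in Set.Icc (-D) D,
        ((b ^ 2 / κ ^ 2 + (a - b) ^ 2) ^ (-s / 2) : ℝ))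
      ≤ ∫ b in Set.Icc (-l) l, (I * κ ^ (s - 1)) * |b| ^ (1 - s) := houter
    _ = I * κ ^ (s - 1) * J := by rw [integral_const_mul]
    _ = (I * J) * κ ^ (s - 1) := by ring
    _ ≤ (I + 1) * (J + 1) * κ ^ (s - 1) := by nlinarith
end
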